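/- The function A(x) = ∫_0^x (1/(1+t²)) log(4/(1+t²)) dt is well-defined for all real x, is odd, and agrees with A₁(x) where A_m(x) = (2^{2m-1}/(2m-1)!) ∫_0^∞ t^{2m-1} / (x sinh²t + x^{-1} cosh²t) dt for m = 1 and x > 0. -/

import Mathlib

open MeasureTheory Filter Topology

/-- Zagier's function `A(x) = ∫_0^x (1/(1+t²)) log(4/(1+t²)) dt`. -/
noncomputable def zagierA (x : ℝ) : ℝ :=
  ∫ t in (0 : ℝ)..x, (1 / (1 + t ^ 2)) * Real.log (4 / (1 + t ^ 2))

/-- Zagier's function `A_m(x)` (here for `m = 1`):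
`A₁(x) = 2 ∫_0^∞ t/(x sinh²t + x⁻¹ cosh²t) dt`. -/
noncomputable def zagierA1 (x : ℝ) : ℝ :=
  (2 ^ (2 * 1 - 1) / (Nat.factorial (2 * 1 - 1) : ℝ)) *
    ∫ t in Set.Ioi (0 : ℝ), t ^ (2 * 1 - 1) / (x * Real.sinh t ^ 2 + x⁻¹ * Real.cosh t ^ 2)

/-- inverse hyperbolic tangent -/
noncomputable def atnh (u : ℝ) : ℝ := Real.log ((1 + u) / (1 - u)) / 2

lemma atnh_measurable : Measurable atnh :=
  (Real.measurable_log.comp ((measurable_const.add measurable_id).div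
    (measurable_const.sub measurable_id))).div_const 2

lemma atnh_nonneg {u : ℝ} (h0 : 0 ≤ u) (h1 : u ≤ 1) : 0 ≤ atnh u := by
  rcases eq_or_lt_of_le h1 with rfl | h1
  · simp [atnh]
  · apply div_nonneg _ (by norm_num)
    apply Real.log_nonneg
    rw [le_div_iff₀ (by linarith)]
    linarith

lemma hasDerivAt_G {u : ℝ} (h0 : 0 < u) (h1 : u < 1) :
    HasDerivAt (fun u : ℝ => ((1+u) * Real.log (1+u) + (1-u) * Real.log (1-u)) / 2)
      (atnh u) u := by
  have e1 : (0:ℝ) < 1 + u := by linarith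
  have e2 : (0:ℝ) < 1 - u := by linarith
  have d1 : HasDerivAt (fun u : ℝ => (1+u) * Real.log (1+u)) ((Real.log (1+u) + 1) * 1) u :=
    (Real.hasDerivAt_mul_log e1.ne').comp u ((hasDerivAt_id u).const_add 1)
  have d2 : HasDerivAt (fun u : ℝ => (1-u) * Real.log (1-u)) ((Real.log (1-u) + 1) * (-1)) u :=
    (Real.hasDerivAt_mul_log e2.ne').comp u ((hasDerivAt_id u).const_sub 1)
  have := (d1.add d2).div_const 2
  refine this.congr_deriv ?_
  unfold atnh
  rw [Real.log_div e1.ne' e2.ne']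
  ring

lemma atnh_integrableOn : IntegrableOn atnh (Set.Ioc 0 1) := by
  apply intervalIntegral.integrableOn_deriv_of_nonneg
    (g := fun u : ℝ => ((1+u) * Real.log (1+u) + (1-u) * Real.log (1-u)) / 2)
  · apply Continuous.continuousOn
    have h : Continuous (fun y : ℝ => y * Real.log y) := Real.continuous_mul_log
    exact ((h.comp (continuous_const.add continuous_id)).add
      (h.comp (continuous_const.sub continuous_id))).div_const 2
  · intro u hu; exact hasDerivAt_G hu.1 hu.2
  · intro u hu; exact atnh_nonneg hu.1.le hu.2.le

lemma atnh_II : IntervalIntegrable atnh volume 0 1 := by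
  rw [intervalIntegrable_iff_integrableOn_Ioc_of_le zero_le_one]
  exact atnh_integrableOn

lemma bound_II : IntervalIntegrable (fun t => 2 * |atnh t|) volume 0 1 :=
  (atnh_II.abs).const_mul 2

lemma hasDerivAt_inner (t x : ℝ) :
    HasDerivAt (fun x : ℝ => 2*x*atnh t/(1+x^2*t^2))
      (2*atnh t*(1-x^2*t^2)/(1+x^2*t^2)^2) x := by
  have hden : (0:ℝ) < 1 + x^2*t^2 := by positivity
  have hnum : HasDerivAt (fun x : ℝ => 2*x*atnh t) (2*1*atnh t) x :=
    ((hasDerivAt_id x).const_mul 2).mul_const (atnh t)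
  have hd : HasDerivAt (fun x : ℝ => 1+x^2*t^2) (2*x^1*t^2) x :=
    ((hasDerivAt_pow 2 x).mul_const (t^2)).const_add 1
  have h := hnum.div hd hden.ne'
  refine h.congr_deriv ?_
  field_simp
  ring

lemma deriv_bound (t x : ℝ) :
    ‖2*atnh t*(1-x^2*t^2)/(1+x^2*t^2)^2‖ ≤ 2*|atnh t| := by
  have h1 : (0:ℝ) < 1 + x^2*t^2 := by positivity
  rw [Real.norm_eq_abs, abs_div, abs_of_pos (pow_pos h1 2), div_le_iff₀ (by positivity)]
  have h2 : |1 - x^2*t^2| ≤ (1+x^2*t^2)^2 := by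
    rw [abs_le]
    constructor <;> nlinarith [sq_nonneg (x^2*t^2), sq_nonneg (x*t)]
  calc |2*atnh t*(1-x^2*t^2)| = 2*|atnh t| * |1-x^2*t^2| := by
        rw [abs_mul, abs_mul, abs_two]
    _ ≤ 2*|atnh t| * (1+x^2*t^2)^2 := by gcongr

lemma hasDerivAt_atnh {u : ℝ} (h0 : 0 < u) (h1 : u < 1) :
    HasDerivAt atnh (1/(1-u^2)) u := by
  have e1 : (0:ℝ) < 1 + u := by linarith
  have e2 : (0:ℝ) < 1 - u := by linarith
  have hr : HasDerivAt (fun u : ℝ => (1+u)/(1-u))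
      ((1*(1-u) - (1+u)*(-1))/(1-u)^2) u :=
    ((hasDerivAt_id u).const_add 1).div ((hasDerivAt_id u).const_sub 1) e2.ne'
  have hpos : (0:ℝ) < (1+u)/(1-u) := by positivity
  have hlog := (Real.hasDerivAt_log hpos.ne').comp u hr
  have h := hlog.div_const 2
  refine h.congr_deriv ?_
  have h1u : (1:ℝ) - u^2 ≠ 0 := by nlinarith
  field_simp
  ring

noncomputable def Phi (x u : ℝ) : ℝ :=
  atnh u * (2*u/(1+x^2*u^2) - 2/(1+x^2)) +
    2/(1+x^2) * (Real.log (1+u) - Real.log (1+x^2*u^2)/2)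

lemma hasDerivAt_Phi (x : ℝ) {u : ℝ} (h0 : 0 < u) (h1 : u < 1) :
    HasDerivAt (Phi x) (2*atnh u*(1-x^2*u^2)/(1+x^2*u^2)^2) u := by
  have e1 : (0:ℝ) < 1 + u := by linarith
  have e2 : (0:ℝ) < 1 - u := by linarith
  have hden : (0:ℝ) < 1 + x^2*u^2 := by positivity
  have hx2 : (0:ℝ) < 1 + x^2 := by positivity
  have ha := hasDerivAt_atnh h0 h1
  have hnum : HasDerivAt (fun u : ℝ => 2*u) (2*1) u := (hasDerivAt_id u).const_mul 2
  have hd : HasDerivAt (fun u : ℝ => 1+x^2*u^2) (x^2*(2*u^1)) u :=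
    ((hasDerivAt_pow 2 u).const_mul (x^2)).const_add 1
  have hv : HasDerivAt (fun u : ℝ => 2*u/(1+x^2*u^2) - 2/(1+x^2))
      ((2*1*(1+x^2*u^2) - 2*u*(x^2*(2*u^1)))/(1+x^2*u^2)^2) u :=
    (hnum.div hd hden.ne').sub_const (2/(1+x^2))
  have hlog1 : HasDerivAt (fun u : ℝ => Real.log (1+u)) ((1+u)⁻¹ * 1) u :=
    (Real.hasDerivAt_log e1.ne').comp u ((hasDerivAt_id u).const_add 1)
  have hlog2 : HasDerivAt (fun u : ℝ => Real.log (1+x^2*u^2))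
      ((1+x^2*u^2)⁻¹ * (x^2*(2*u^1))) u :=
    HasDerivAt.comp (h₂ := Real.log) u (Real.hasDerivAt_log hden.ne') hd
  have hC := (hlog1.sub (hlog2.div_const 2)).const_mul (2/(1+x^2))
  have h := (ha.mul hv).add hC
  unfold Phi
  refine h.congr_deriv ?_
  have h1u : (1:ℝ) - u^2 ≠ 0 := by nlinarith
  field_simp
  ring

lemma tendsto_Phi_zero (x : ℝ) : Tendsto (Phi x) (𝓝[>] (0:ℝ)) (𝓝 0) := by
  have hat : ContinuousAt atnh 0 := by
    have h1 : ContinuousAt (fun u : ℝ => (1+u)/(1-u)) 0 :=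
      (continuousAt_const.add continuousAt_id).div
        (continuousAt_const.sub continuousAt_id) (by norm_num)
    exact ((Real.continuousAt_log (by norm_num)).comp h1).div_const 2
  have hc : ContinuousAt (Phi x) 0 := by
    unfold Phi
    apply ContinuousAt.add
    · exact hat.mul (((continuousAt_const.mul continuousAt_id).div
        (by fun_prop) (by positivity)).sub continuousAt_const)
    · apply continuousAt_const.mul
      apply ContinuousAt.sub
      · exact (Real.continuousAt_log (by norm_num)).comp
          (continuousAt_const.add continuousAt_id)
      · exact ((Real.continuousAt_log (by norm_num)).comp (by fun_prop)).div_const 2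
  have h0 : Phi x 0 = 0 := by
    simp [Phi, atnh]
  have := (hc.continuousWithinAt (s := Set.Ioi 0)).tendsto
  rwa [h0] at this

lemma tendsto_Phi_one (x : ℝ) :
    Tendsto (Phi x) (𝓝[<] (1:ℝ))
      (𝓝 (2/(1+x^2) * (Real.log 2 - Real.log (1+x^2)/2))) := by
  have hx2 : (0:ℝ) < 1 + x^2 := by positivity
  -- continuous part
  have hC : Tendsto (fun u : ℝ => 2/(1+x^2) * (Real.log (1+u) - Real.log (1+x^2*u^2)/2))
      (𝓝[<] (1:ℝ)) (𝓝 (2/(1+x^2) * (Real.log 2 - Real.log (1+x^2)/2))) := by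
    have hc : ContinuousAt (fun u : ℝ => 2/(1+x^2) *
        (Real.log (1+u) - Real.log (1+x^2*u^2)/2)) 1 := by
      apply continuousAt_const.mul
      apply ContinuousAt.sub
      · exact (Real.continuousAt_log (by norm_num)).comp
          (continuousAt_const.add continuousAt_id)
      · exact ((Real.continuousAt_log (by positivity)).comp (by fun_prop)).div_const 2
    have := (hc.continuousWithinAt (s := Set.Iio 1)).tendsto
    norm_num at this
    exact this
  -- main part
  have hT1 : Tendsto (fun u : ℝ => Real.log (1+u)/2 * (2*u/(1+x^2*u^2) - 2/(1+x^2)))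
      (𝓝[<] (1:ℝ)) (𝓝 0) := by
    have hc : ContinuousAt (fun u : ℝ => Real.log (1+u)/2 *
        (2*u/(1+x^2*u^2) - 2/(1+x^2))) 1 := by
      apply ContinuousAt.mul
      · exact ((Real.continuousAt_log (by norm_num)).comp
          (continuousAt_const.add continuousAt_id)).div_const 2
      · exact ((continuousAt_const.mul continuousAt_id).div
          (by fun_prop) (by positivity)).sub continuousAt_const
    have := (hc.continuousWithinAt (s := Set.Iio 1)).tendsto
    have hval : Real.log (1+(1:ℝ))/2 * (2*1/(1+x^2*1^2) - 2/(1+x^2)) = 0 := by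
      norm_num
    rwa [hval] at this
  have hT2 : Tendsto (fun u : ℝ => ((1-u) * Real.log (1-u)) *
      ((1-x^2*u)/((1+x^2*u^2)*(1+x^2)))) (𝓝[<] (1:ℝ)) (𝓝 0) := by
    have hm : Tendsto (fun u : ℝ => (1-u) * Real.log (1-u)) (𝓝[<] (1:ℝ)) (𝓝 0) := by
      have hc : ContinuousAt (fun u : ℝ => (1-u) * Real.log (1-u)) 1 := by
        have hcc : Continuous (fun u : ℝ => (1-u) * Real.log (1-u)) :=
          Real.continuous_mul_log.comp (continuous_const.sub continuous_id)
        exact hcc.continuousAt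
      have := (hc.continuousWithinAt (s := Set.Iio 1)).tendsto
      simpa using this
    have hw : Tendsto (fun u : ℝ => (1-x^2*u)/((1+x^2*u^2)*(1+x^2))) (𝓝[<] (1:ℝ))
        (𝓝 ((1-x^2*1)/((1+x^2*1^2)*(1+x^2)))) := by
      have hc : ContinuousAt (fun u : ℝ => (1-x^2*u)/((1+x^2*u^2)*(1+x^2))) 1 := by
        apply ContinuousAt.div (by fun_prop) (by fun_prop)
        positivity
      exact (hc.continuousWithinAt (s := Set.Iio 1)).tendsto
    have := hm.mul hw
    simpa using this
  have hmain : Tendsto (fun u : ℝ => atnh u * (2*u/(1+x^2*u^2) - 2/(1+x^2)))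
      (𝓝[<] (1:ℝ)) (𝓝 0) := by
    have heq : ∀ u ∈ Set.Ioo (0:ℝ) 1,
        Real.log (1+u)/2 * (2*u/(1+x^2*u^2) - 2/(1+x^2)) +
          ((1-u) * Real.log (1-u)) * ((1-x^2*u)/((1+x^2*u^2)*(1+x^2)))
        = atnh u * (2*u/(1+x^2*u^2) - 2/(1+x^2)) := by
      intro u hu
      have e1 : (0:ℝ) < 1 + u := by linarith [hu.1]
      have e2 : (0:ℝ) < 1 - u := by linarith [hu.2]
      have hden : (0:ℝ) < 1 + x^2*u^2 := by positivity
      unfold atnh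
      rw [Real.log_div e1.ne' e2.ne']
      field_simp
      ring
    have hev : (fun u : ℝ => Real.log (1+u)/2 * (2*u/(1+x^2*u^2) - 2/(1+x^2)) +
          ((1-u) * Real.log (1-u)) * ((1-x^2*u)/((1+x^2*u^2)*(1+x^2))))
        =ᶠ[𝓝[<] (1:ℝ)] (fun u => atnh u * (2*u/(1+x^2*u^2) - 2/(1+x^2))) := by
      filter_upwards [Ioo_mem_nhdsLT_of_mem (by norm_num : (1:ℝ) ∈ Set.Ioc (0:ℝ) 1)]
        with u hu using heq u hu
    have := (hT1.add hT2).congr' hev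
    simpa using this
  have := hmain.add hC
  simp only [zero_add] at this
  exact this

lemma F'_meas (x : ℝ) :
    AEStronglyMeasurable (fun t : ℝ => 2*atnh t*(1-x^2*t^2)/(1+x^2*t^2)^2)
      (volume.restrict (Set.uIoc (0:ℝ) 1)) := by
  apply Measurable.aestronglyMeasurable
  apply Measurable.div
  · exact (atnh_measurable.const_mul 2).mul
      (measurable_const.sub ((measurable_id.pow_const 2).const_mul (x^2)))
  · exact ((measurable_id.pow_const 2).const_mul (x^2)).const_add 1 |>.pow_const 2

lemma F'_II (x : ℝ) :
    IntervalIntegrable (fun t : ℝ => 2*atnh t*(1-x^2*t^2)/(1+x^2*t^2)^2) volume 0 1 := by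
  apply bound_II.mono_fun (F'_meas x)
  apply ae_of_all
  intro t
  show ‖2*atnh t*(1-x^2*t^2)/(1+x^2*t^2)^2‖ ≤ ‖2 * |atnh t|‖
  rw [Real.norm_eq_abs (2 * |atnh t|), abs_of_nonneg (by positivity)]
  exact deriv_bound t x

lemma integral_deriv (x : ℝ) :
    ∫ t in (0:ℝ)..1, 2*atnh t*(1-x^2*t^2)/(1+x^2*t^2)^2
      = (1/(1+x^2)) * Real.log (4/(1+x^2)) := by
  have hx2 : (0:ℝ) < 1 + x^2 := by positivity
  rw [intervalIntegral.integral_eq_sub_of_hasDerivAt_of_tendsto zero_lt_one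
    (fun u hu => hasDerivAt_Phi x hu.1 hu.2) (F'_II x) (tendsto_Phi_zero x)
    (tendsto_Phi_one x)]
  rw [Real.log_div (by norm_num) hx2.ne', show (4:ℝ) = 2^2 by norm_num, Real.log_pow]
  push_cast
  ring

noncomputable def Lfun (x : ℝ) : ℝ := ∫ u in (0:ℝ)..1, 2*x*atnh u/(1+x^2*u^2)

lemma F_meas (y : ℝ) :
    AEStronglyMeasurable (fun t : ℝ => 2*y*atnh t/(1+y^2*t^2))
      (volume.restrict (Set.uIoc (0:ℝ) 1)) := by
  apply Measurable.aestronglyMeasurable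
  exact (atnh_measurable.const_mul (2*y)).div
    (((measurable_id.pow_const 2).const_mul (y^2)).const_add 1)

lemma F_II (y : ℝ) :
    IntervalIntegrable (fun t : ℝ => 2*y*atnh t/(1+y^2*t^2)) volume 0 1 := by
  apply ((atnh_II.abs).const_mul (2*|y|)).mono_fun
  · apply Measurable.aestronglyMeasurable
    apply Measurable.div
    · exact atnh_measurable.const_mul (2*y)
    · exact ((measurable_id.pow_const 2).const_mul (y^2)).const_add 1
  · apply ae_of_all
    intro t
    have h1 : (0:ℝ) < 1 + y^2*t^2 := by positivity
    have h0 : (0:ℝ) ≤ 2 * |y| * |atnh t| := by positivity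
    show ‖2*y*atnh t/(1+y^2*t^2)‖ ≤ ‖2 * |y| * |atnh t|‖
    rw [Real.norm_eq_abs, Real.norm_eq_abs, abs_div, abs_of_pos h1,
      abs_of_nonneg h0, abs_mul, abs_mul, abs_two]
    calc 2 * |y| * |atnh t| / (1+y^2*t^2) ≤ 2 * |y| * |atnh t| / 1 := by
          gcongr <;> nlinarith [sq_nonneg (y*t), abs_nonneg y, abs_nonneg (atnh t)]
      _ = 2 * |y| * |atnh t| := by ring

lemma Lfun_hasDeriv (x : ℝ) :
    HasDerivAt Lfun ((1/(1+x^2)) * Real.log (4/(1+x^2))) x := by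
  have h := (intervalIntegral.hasDerivAt_integral_of_dominated_loc_of_deriv_le
    (F := fun y t => 2*y*atnh t/(1+y^2*t^2))
    (F' := fun y t => 2*atnh t*(1-y^2*t^2)/(1+y^2*t^2)^2)
    (bound := fun t => 2*|atnh t|) (a := 0) (b := 1) (x₀ := x) Filter.univ_mem
    (Eventually.of_forall fun y => F_meas y) (F_II x) (F'_meas x)
    (ae_of_all _ fun t _ y _ => deriv_bound t y) bound_II
    (ae_of_all _ fun t _ y _ => hasDerivAt_inner t y)).2
  rw [integral_deriv x] at h
  exact h

lemma tanh_hasDeriv (t : ℝ) : HasDerivAt Real.tanh (1/Real.cosh t^2) t := by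
  have h := (Real.hasDerivAt_sinh t).div (Real.hasDerivAt_cosh t) (Real.cosh_pos t).ne'
  have hfun : Real.tanh = fun y => Real.sinh y / Real.cosh y :=
    funext fun y => Real.tanh_eq_sinh_div_cosh y
  rw [hfun]
  refine h.congr_deriv ?_
  have h2 := Real.cosh_sq_sub_sinh_sq t
  have h3 : Real.cosh t * Real.cosh t - Real.sinh t * Real.sinh t = 1 := by
    nlinarith [Real.cosh_sq_sub_sinh_sq t]
  rw [h3]

lemma atnh_tanh (t : ℝ) : atnh (Real.tanh t) = t := by
  unfold atnh
  rw [Real.tanh_eq_sinh_div_cosh]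
  have hc := (Real.cosh_pos t).ne'
  have h1 : 1 + Real.sinh t / Real.cosh t = Real.exp t / Real.cosh t := by
    rw [← Real.cosh_add_sinh]; field_simp
  have h2 : 1 - Real.sinh t / Real.cosh t = Real.exp (-t) / Real.cosh t := by
    rw [← Real.cosh_sub_sinh]; field_simp
  have h4 : Real.exp t / Real.cosh t / (Real.exp (-t) / Real.cosh t)
      = Real.exp t / Real.exp (-t) := by
    rw [div_div_div_comm, div_self hc, div_one]
  rw [h1, h2, h4, ← Real.exp_sub, Real.log_exp]
  ring

lemma tanh_atnh {u : ℝ} (h0 : 0 < u) (h1 : u < 1) : Real.tanh (atnh u) = u := by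
  have e2 : (0:ℝ) < 1 - u := by linarith
  have hr : (0:ℝ) < (1+u)/(1-u) := by positivity
  set t := atnh u with ht
  have hE : Real.exp t * Real.exp t = (1+u)/(1-u) := by
    rw [← Real.exp_add, ht]
    unfold atnh
    rw [show Real.log ((1+u)/(1-u))/2 + Real.log ((1+u)/(1-u))/2
        = Real.log ((1+u)/(1-u)) by ring]
    exact Real.exp_log hr
  have hEpos : (0:ℝ) < Real.exp t := Real.exp_pos t
  rw [Real.tanh_eq_sinh_div_cosh, Real.sinh_eq, Real.cosh_eq, Real.exp_neg]
  have hden : Real.exp t + (Real.exp t)⁻¹ ≠ 0 := by positivity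
  have hE' : Real.exp t * Real.exp t * (1-u) = 1+u := by
    rw [hE]; field_simp
  field_simp
  linear_combination hE'

lemma tanh_injOn : Set.InjOn Real.tanh (Set.Ioi (0:ℝ)) := by
  intro a _ b _ h
  have := congrArg atnh h
  rwa [atnh_tanh, atnh_tanh] at this

lemma tanh_image : Real.tanh '' Set.Ioi (0:ℝ) = Set.Ioo (0:ℝ) 1 := by
  ext u
  constructor
  · rintro ⟨t, ht, rfl⟩
    have ht' : (0:ℝ) < t := ht
    have hs : 0 < Real.sinh t := by
      simpa using Real.sinh_lt_sinh.2 ht'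
    constructor
    · rw [Real.tanh_eq_sinh_div_cosh]
      positivity
    · rw [Real.tanh_eq_sinh_div_cosh, div_lt_one (Real.cosh_pos t)]
      exact Real.sinh_lt_cosh t
  · rintro ⟨h0, h1⟩
    refine ⟨atnh u, ?_, tanh_atnh h0 h1⟩
    show 0 < atnh u
    unfold atnh
    apply div_pos _ (by norm_num)
    apply Real.log_pos
    rw [lt_div_iff₀ (by linarith)]
    linarith

lemma sub_eq {x : ℝ} (hx : 0 < x) :
    ∫ u in Set.Ioo (0:ℝ) 1, 2*x*atnh u/(1+x^2*u^2)
      = ∫ t in Set.Ioi (0:ℝ), 2 * (t / (x * Real.sinh t^2 + x⁻¹ * Real.cosh t^2)) := by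
  rw [← tanh_image, integral_image_eq_integral_abs_deriv_smul measurableSet_Ioi
    (fun t _ => (tanh_hasDeriv t).hasDerivWithinAt) tanh_injOn]
  apply setIntegral_congr_fun measurableSet_Ioi
  intro t _
  dsimp only
  have hc := (Real.cosh_pos t).ne'
  have hxne := hx.ne'
  rw [atnh_tanh, Real.tanh_eq_sinh_div_cosh, smul_eq_mul,
    abs_of_pos (by positivity : (0:ℝ) < 1/Real.cosh t^2)]
  have hd : (0:ℝ) < x * Real.sinh t^2 + x⁻¹ * Real.cosh t^2 :=
    add_pos_of_nonneg_of_pos (mul_nonneg hx.le (sq_nonneg _))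
      (mul_pos (inv_pos.2 hx) (pow_pos (Real.cosh_pos t) 2))
  field_simp
  ring

lemma f0_continuous :
    Continuous (fun t : ℝ => (1 / (1 + t ^ 2)) * Real.log (4 / (1 + t ^ 2))) := by
  have hne : ∀ t : ℝ, (1:ℝ) + t^2 ≠ 0 := fun t => by positivity
  have h1 : Continuous (fun t : ℝ => 1 + t^2) := by fun_prop
  apply Continuous.mul
  · exact continuous_const.div h1 hne
  · apply Continuous.log
    · exact continuous_const.div h1 hne
    · intro t
      have : (0:ℝ) < 4 / (1 + t^2) := by positivity
      exact this.ne'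
  
lemma Lfun_zero : Lfun 0 = 0 := by
  unfold Lfun
  have : ∀ u : ℝ, 2*(0:ℝ)*atnh u/(1+(0:ℝ)^2*u^2) = 0 := fun u => by norm_num
  simp [this]

lemma zagierA_eq_Lfun (x : ℝ) : zagierA x = Lfun x := by
  unfold zagierA
  rw [intervalIntegral.integral_eq_sub_of_hasDerivAt
    (fun t _ => Lfun_hasDeriv t) (f0_continuous.intervalIntegrable 0 x), Lfun_zero, sub_zero]

/-- `A(x)` is well-defined for every real `x`, is odd, and agrees with `A₁(x)` for `x > 0`. -/
theorem zagierA_welldefined_odd_eq_A1 :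
    (∀ x : ℝ, IntervalIntegrable
        (fun t : ℝ => (1 / (1 + t ^ 2)) * Real.log (4 / (1 + t ^ 2))) volume 0 x) ∧
    (∀ x : ℝ, zagierA (-x) = -zagierA x) ∧
    (∀ x : ℝ, 0 < x → zagierA x = zagierA1 x) := by
  refine ⟨fun x => f0_continuous.intervalIntegrable 0 x, fun x => ?_, fun x hx => ?_⟩
  · unfold zagierA
    have heven : Set.EqOn (fun t : ℝ => (1 / (1 + t ^ 2)) * Real.log (4 / (1 + t ^ 2)))
        (fun t : ℝ => (1 / (1 + (-t) ^ 2)) * Real.log (4 / (1 + (-t) ^ 2)))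
        (Set.uIcc (0:ℝ) (-x)) := fun t _ => by norm_num
    rw [intervalIntegral.integral_congr heven]
    have := intervalIntegral.integral_comp_neg
      (fun t : ℝ => (1 / (1 + t ^ 2)) * Real.log (4 / (1 + t ^ 2))) (a := 0) (b := -x)
    rw [this]
    norm_num
    rw [intervalIntegral.integral_symm]
  · rw [zagierA_eq_Lfun]
    unfold zagierA1 Lfun
    norm_num
    rw [intervalIntegral.integral_of_le zero_le_one, integral_Ioc_eq_integral_Ioo,
      sub_eq hx, integral_const_mul]
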